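/- Let G be a group with elements g₁,…,g₄ and integers t₁₂₃, t₁₂₄, t₁₃₄, t₂₃₄ satisfying the listed commutator relations. Then for all integers a₁,…,a₄,b₁,…,b₄ one has (g₁^{a₁}g₂^{a₂}g₃^{a₃}g₄^{a₄})·(g₁^{b₁}g₂^{b₂}g₃^{b₃}g₄^{b₄}) = g₁^{p₁}g₂^{p₂}g₃^{p₃}g₄^{p₄}, where p₁ = a₁+b₁, p₂ = a₂+b₂, p₃ = a₃+b₃+t₁₂₃a₂b₁, and p₄ = a₄+b₄+t₁₂₄a₂b₁+t₁₃₄a₃b₁+t₂₃₄a₃b₂+t₁₂₃t₁₃₄a₂s₂(b₁)+t₁₂₃t₂₃₄s₂(a₂)b₁+t₁₂₃t₂₃₄a₂b₁b₂. -/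

import Mathlib

/-- `s₂(x) = x(x-1)/2` -/
def s2 (x : ℤ) : ℤ := x * (x - 1) / 2


lemma s2_mul_two (n : ℤ) : s2 n * 2 = n * (n - 1) := by
  have h : Even ((n - 1) * (n - 1 + 1)) := Int.even_mul_succ_self _
  obtain ⟨k, hk⟩ := h
  have h2 : (2:ℤ) ∣ n * (n - 1) := ⟨k, by linarith⟩
  exact Int.ediv_mul_cancel h2

lemma s2_zero : s2 0 = 0 := by norm_num [s2]

lemma s2_add_one (n : ℤ) : s2 (n + 1) = s2 n + n := by
  have h1 := s2_mul_two (n + 1)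
  have h2 := s2_mul_two n
  have h3 : s2 (n+1) * 2 = (s2 n + n) * 2 := by rw [h1]; nlinarith [h2]
  omega

lemma s2_sub_one (n : ℤ) : s2 (n - 1) = s2 n - n + 1 := by
  have h1 := s2_mul_two (n - 1)
  have h2 := s2_mul_two n
  have h3 : s2 (n-1) * 2 = (s2 n - n + 1) * 2 := by rw [h1]; nlinarith [h2]
  omega

lemma zpow_split_add {G : Type*} [Group G] (g : G) (n : ℤ) :
    g ^ (n + 1) = g ^ n * g ^ (1:ℤ) := by rw [← zpow_add]

lemma zpow_split_sub {G : Type*} [Group G] (g : G) (n : ℤ) :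
    g ^ (n - 1) = g ^ n * g ^ (-1:ℤ) := by rw [← zpow_add, sub_eq_add_neg]

lemma swap_step {G : Type*} [Group G] {x y c : G} (h : y * x = x * y * c)
    (hcy : Commute c y) (m : ℤ) : y ^ m * x = x * y ^ m * c ^ m := by
  have hc : x⁻¹ * y * x = y * c := by rw [mul_assoc, h]; group
  have h2 : x⁻¹ * y ^ m * x = (y * c) ^ m := by
    have hm := map_zpow (MulAut.conj x⁻¹) y m
    simp only [MulAut.conj_apply, inv_inv] at hm
    rw [← hc, ← hm]
  have h3 : (y * c) ^ m = y ^ m * c ^ m := hcy.symm.mul_zpow m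
  have h4 : y ^ m * x = x * (x⁻¹ * y ^ m * x) := by group
  rw [h4, h2, h3, ← mul_assoc]

lemma swap_step2 {G : Type*} [Group G] {x y c : G} (h : y * x = x * y * c)
    (hcx : Commute c x) (n : ℤ) : y * x ^ n = x ^ n * y * c ^ n := by
  have h' : x * y = y * x * c⁻¹ := by rw [h]; group
  have h2 : x ^ n * y = y * x ^ n * (c⁻¹) ^ n := swap_step h' hcx.inv_left n
  rw [inv_zpow] at h2
  rw [h2]; group

lemma swap_zpow {G : Type*} [Group G] {x y c : G} (h : y * x = x * y * c)
    (hcx : Commute c x) (hcy : Commute c y) (m n : ℤ) :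
    y ^ m * x ^ n = x ^ n * y ^ m * c ^ (m * n) := by
  have h1 : y ^ m * x = x * y ^ m * c ^ m := swap_step h hcy m
  have h2 : y ^ m * x ^ n = x ^ n * y ^ m * (c ^ m) ^ n :=
    swap_step2 h1 (hcx.zpow_left m) n
  rw [h2, ← zpow_mul]

lemma hall_aux {G : Type*} [Group G] (x y u v : G) (p q r s : ℤ)
    (hyx : y ^ (1:ℤ) * x ^ (1:ℤ) = x ^ (1:ℤ) * (y ^ (1:ℤ) * (u ^ p * v ^ q)))
    (hux : ∀ a b : ℤ, u ^ a * x ^ b = x ^ b * (u ^ a * v ^ (r * a * b)))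
    (huy : ∀ a b : ℤ, u ^ a * y ^ b = y ^ b * (u ^ a * v ^ (s * a * b)))
    (hvx : ∀ a b : ℤ, v ^ a * x ^ b = x ^ b * v ^ a)
    (hvy : ∀ a b : ℤ, v ^ a * y ^ b = y ^ b * v ^ a)
    (hvu : ∀ a b : ℤ, v ^ a * u ^ b = u ^ b * v ^ a)
    (m n : ℤ) :
    y ^ m * x ^ n
      = x ^ n * (y ^ m * (u ^ (p * m * n)
          * v ^ (q * m * n + p * r * m * s2 n + p * s * s2 m * n))) := by
  have pm : ∀ (g : G) (a b : ℤ), g ^ a * g ^ b = g ^ (a + b) :=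
    fun g a b => (zpow_add g a b).symm
  have pmt : ∀ (g : G) (a b : ℤ) (t : G), g ^ a * (g ^ b * t) = g ^ (a + b) * t := by
    intro g a b t; rw [← mul_assoc, pm]
  have huxt : ∀ (a b : ℤ) (t : G), u ^ a * (x ^ b * t) = x ^ b * (u ^ a * (v ^ (r*a*b) * t)) := by
    intro a b t; rw [← mul_assoc, hux]; simp only [mul_assoc]
  have huyt : ∀ (a b : ℤ) (t : G), u ^ a * (y ^ b * t) = y ^ b * (u ^ a * (v ^ (s*a*b) * t)) := by
    intro a b t; rw [← mul_assoc, huy]; simp only [mul_assoc]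
  have hvxt : ∀ (a b : ℤ) (t : G), v ^ a * (x ^ b * t) = x ^ b * (v ^ a * t) := by
    intro a b t; rw [← mul_assoc, hvx]; simp only [mul_assoc]
  have hvyt : ∀ (a b : ℤ) (t : G), v ^ a * (y ^ b * t) = y ^ b * (v ^ a * t) := by
    intro a b t; rw [← mul_assoc, hvy]; simp only [mul_assoc]
  have hvut : ∀ (a b : ℤ) (t : G), v ^ a * (u ^ b * t) = u ^ b * (v ^ a * t) := by
    intro a b t; rw [← mul_assoc, hvu]; simp only [mul_assoc]
  have hyxt : ∀ t : G, y ^ (1:ℤ) * (x ^ (1:ℤ) * t)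
      = x ^ (1:ℤ) * (y ^ (1:ℤ) * (u ^ p * (v ^ q * t))) := by
    intro t; rw [← mul_assoc, hyx]; simp only [mul_assoc]
  have hyxi : y ^ (1:ℤ) * x ^ (-1:ℤ)
      = x ^ (-1:ℤ) * (y ^ (1:ℤ) * (u ^ (-p) * v ^ (r*p - q))) := by
    apply mul_right_cancel (b := x ^ (1:ℤ))
    simp only [mul_assoc, hvx, hvxt, hux, huxt, hyx, hyxt, hvu, hvut, hvy, hvyt,
      huy, huyt, pm, pmt]
    group
  have hyxit : ∀ t : G, y ^ (1:ℤ) * (x ^ (-1:ℤ) * t)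
      = x ^ (-1:ℤ) * (y ^ (1:ℤ) * (u ^ (-p) * (v ^ (r*p - q) * t))) := by
    intro t; rw [← mul_assoc, hyxi]; simp only [mul_assoc]
  have stepA : ∀ n : ℤ, y ^ (1:ℤ) * x ^ n
      = x ^ n * (y ^ (1:ℤ) * (u ^ (p*n) * v ^ (q*n + p*r*s2 n))) := by
    intro n
    induction n using Int.induction_on with
    | zero => rw [s2_zero]; group
    | succ k ih =>
        rw [s2_add_one, zpow_split_add x, ← mul_assoc, ih]
        simp only [mul_assoc, hvx, hvxt, hux, huxt, hyx, hyxt, hvu, hvut, hvy, hvyt,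
          huy, huyt, pm, pmt]
        group
    | pred k ih =>
        rw [s2_sub_one, zpow_split_sub x, ← mul_assoc, ih]
        simp only [mul_assoc, hvx, hvxt, hux, huxt, hyxi, hyxit, hvu, hvut, hvy, hvyt,
          huy, huyt, pm, pmt]
        group
  have stepAt : ∀ (n : ℤ) (t : G), y ^ (1:ℤ) * (x ^ n * t)
      = x ^ n * (y ^ (1:ℤ) * (u ^ (p*n) * (v ^ (q*n + p*r*s2 n) * t))) := by
    intro n t; rw [← mul_assoc, stepA]; simp only [mul_assoc]
  have stepAi : ∀ n : ℤ, y ^ (-1:ℤ) * x ^ n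
      = x ^ n * (y ^ (-1:ℤ) * (u ^ (-(p*n)) * v ^ (s*p*n - (q*n + p*r*s2 n)))) := by
    intro n
    apply mul_left_cancel (a := y ^ (1:ℤ))
    simp only [mul_assoc, stepA, stepAt, hvy, hvyt, huy, huyt, hvu, hvut, pm, pmt]
    group
  have stepAit : ∀ (n : ℤ) (t : G), y ^ (-1:ℤ) * (x ^ n * t)
      = x ^ n * (y ^ (-1:ℤ) * (u ^ (-(p*n)) * (v ^ (s*p*n - (q*n + p*r*s2 n)) * t))) := by
    intro n t; rw [← mul_assoc, stepAi]; simp only [mul_assoc]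
  induction m using Int.induction_on with
  | zero => rw [s2_zero]; group
  | succ k ih =>
      rw [s2_add_one, zpow_split_add y, mul_assoc, stepA, ← mul_assoc, ih]
      simp only [mul_assoc, hvx, hvxt, hux, huxt, hvu, hvut, hvy, hvyt,
        huy, huyt, pm, pmt]
      group
  | pred k ih =>
      rw [s2_sub_one, zpow_split_sub y, mul_assoc, stepAi, ← mul_assoc, ih]
      simp only [mul_assoc, hvx, hvxt, hux, huxt, hvu, hvut, hvy, hvyt,
        huy, huyt, pm, pmt]
      group

/-- Hall polynomials for torsion free nilpotent groups of Hirsch length 4: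
multiplication of normal forms is given by the polynomials `p₁,…,p₄`. -/
theorem hall_polynomials_length_four (G : Type*) [Group G] (g1 g2 g3 g4 : G)
    (t123 t124 t134 t234 : ℤ)
    (h21 : g2⁻¹ * g1⁻¹ * g2 * g1 = g3 ^ t123 * g4 ^ t124)
    (h31 : g3⁻¹ * g1⁻¹ * g3 * g1 = g4 ^ t134)
    (h32 : g3⁻¹ * g2⁻¹ * g3 * g2 = g4 ^ t234)
    (h41 : g4⁻¹ * g1⁻¹ * g4 * g1 = 1)
    (h42 : g4⁻¹ * g2⁻¹ * g4 * g2 = 1)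
    (h43 : g4⁻¹ * g3⁻¹ * g4 * g3 = 1) :
    ∀ a1 a2 a3 a4 b1 b2 b3 b4 : ℤ,
      (g1 ^ a1 * g2 ^ a2 * g3 ^ a3 * g4 ^ a4) * (g1 ^ b1 * g2 ^ b2 * g3 ^ b3 * g4 ^ b4)
        = g1 ^ (a1 + b1) * g2 ^ (a2 + b2) * g3 ^ (a3 + b3 + t123 * a2 * b1)
            * g4 ^ (a4 + b4 + t124 * a2 * b1 + t134 * a3 * b1 + t234 * a3 * b2
                    + t123 * t134 * a2 * s2 b1 + t123 * t234 * s2 a2 * b1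
                    + t123 * t234 * a2 * b1 * b2) := by
  intro a1 a2 a3 a4 b1 b2 b3 b4
  have e41 : g4 * g1 = g1 * g4 := by
    have h := congrArg (fun z => g1 * g4 * z) h41
    simp only [mul_one] at h
    rw [← h]; group
  have e42 : g4 * g2 = g2 * g4 := by
    have h := congrArg (fun z => g2 * g4 * z) h42
    simp only [mul_one] at h
    rw [← h]; group
  have e43 : g4 * g3 = g3 * g4 := by
    have h := congrArg (fun z => g3 * g4 * z) h43
    simp only [mul_one] at h
    rw [← h]; group
  have c41 : Commute g4 g1 := e41
  have c42 : Commute g4 g2 := e42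
  have c43 : Commute g4 g3 := e43
  have hv1 : ∀ a b : ℤ, g4 ^ a * g1 ^ b = g1 ^ b * g4 ^ a :=
    fun a b => ((c41.zpow_left a).zpow_right b).eq
  have hv2 : ∀ a b : ℤ, g4 ^ a * g2 ^ b = g2 ^ b * g4 ^ a :=
    fun a b => ((c42.zpow_left a).zpow_right b).eq
  have hv3 : ∀ a b : ℤ, g4 ^ a * g3 ^ b = g3 ^ b * g4 ^ a :=
    fun a b => ((c43.zpow_left a).zpow_right b).eq
  have e31 : g3 * g1 = g1 * g3 * g4 ^ t134 := by rw [← h31]; group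
  have e32 : g3 * g2 = g2 * g3 * g4 ^ t234 := by rw [← h32]; group
  have hu1 : ∀ a b : ℤ, g3 ^ a * g1 ^ b = g1 ^ b * (g3 ^ a * g4 ^ (t134 * a * b)) := by
    intro a b
    have h := swap_zpow e31 (c41.zpow_left t134) (c43.zpow_left t134) a b
    rw [h]; group
  have hu2 : ∀ a b : ℤ, g3 ^ a * g2 ^ b = g2 ^ b * (g3 ^ a * g4 ^ (t234 * a * b)) := by
    intro a b
    have h := swap_zpow e32 (c42.zpow_left t234) (c43.zpow_left t234) a b
    rw [h]; group
  have hyx : g2 ^ (1:ℤ) * g1 ^ (1:ℤ)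
      = g1 ^ (1:ℤ) * (g2 ^ (1:ℤ) * (g3 ^ t123 * g4 ^ t124)) := by
    simp only [zpow_one]; rw [← h21]; group
  have hall := hall_aux g1 g2 g3 g4 t123 t124 t134 t234 hyx hu1 hu2 hv1 hv2 hv3
  have hallt : ∀ (m n : ℤ) (t : G), g2 ^ m * (g1 ^ n * t)
      = g1 ^ n * (g2 ^ m * (g3 ^ (t123 * m * n)
          * (g4 ^ (t124 * m * n + t123 * t134 * m * s2 n + t123 * t234 * s2 m * n) * t))) := by
    intro m n t; rw [← mul_assoc, hall]; simp only [mul_assoc]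
  have pm : ∀ (g : G) (a b : ℤ), g ^ a * g ^ b = g ^ (a + b) :=
    fun g a b => (zpow_add g a b).symm
  have pmt : ∀ (g : G) (a b : ℤ) (t : G), g ^ a * (g ^ b * t) = g ^ (a + b) * t := by
    intro g a b t; rw [← mul_assoc, pm]
  have hu1t : ∀ (a b : ℤ) (t : G), g3 ^ a * (g1 ^ b * t)
      = g1 ^ b * (g3 ^ a * (g4 ^ (t134 * a * b) * t)) := by
    intro a b t; rw [← mul_assoc, hu1]; simp only [mul_assoc]
  have hu2t : ∀ (a b : ℤ) (t : G), g3 ^ a * (g2 ^ b * t)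
      = g2 ^ b * (g3 ^ a * (g4 ^ (t234 * a * b) * t)) := by
    intro a b t; rw [← mul_assoc, hu2]; simp only [mul_assoc]
  have hv1t : ∀ (a b : ℤ) (t : G), g4 ^ a * (g1 ^ b * t) = g1 ^ b * (g4 ^ a * t) := by
    intro a b t; rw [← mul_assoc, hv1]; simp only [mul_assoc]
  have hv2t : ∀ (a b : ℤ) (t : G), g4 ^ a * (g2 ^ b * t) = g2 ^ b * (g4 ^ a * t) := by
    intro a b t; rw [← mul_assoc, hv2]; simp only [mul_assoc]
  have hv3t : ∀ (a b : ℤ) (t : G), g4 ^ a * (g3 ^ b * t) = g3 ^ b * (g4 ^ a * t) := by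
    intro a b t; rw [← mul_assoc, hv3]; simp only [mul_assoc]
  simp only [mul_assoc, hall, hallt, hu1, hu1t, hu2, hu2t, hv1, hv1t, hv2, hv2t,
    hv3, hv3t, pm, pmt]
  group
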